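/- Let I ⊆ ℝ be an open interval and A : I → gl(ℝ⁶) a differentiable curve with A(t) ∈ 𝔰𝔭(ℝ⁶) for all t, solving the bracket flow A′(t) = −(½ tr(S_{A(t)}²) + ¼ (tr(J A(t)))²)·A(t) + ½[A(t), [A(t), A(t)ᵗ]] + ½[A(t), S_{A(t)} ∘₆ S_{A(t)}]. Then for all t ∈ I: d/dt |A(t)|² = −( |S_{A(t)}|² + ½(tr J A(t))² )·|A(t)|² − |[A(t), A(t)ᵗ]|² − ⟨ S_{A(t)} ∘₆ S_{A(t)}, [A(t), A(t)ᵗ] ⟩. -/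

import Mathlib

open Matrix BigOperators

noncomputable section

abbrev M6 : Type := Matrix (Fin 6) (Fin 6) ℝ
abbrev M7 : Type := Matrix (Fin 7) (Fin 7) ℝ

/-- The canonical almost complex structure `J` on `ℝ⁶`:
`Je₁ = e₂, Je₂ = −e₁, Je₃ = e₄, Je₄ = −e₃, Je₅ = e₆, Je₆ = −e₅` (0-based indices). -/
def J6 : M6 := Matrix.of fun i j =>
  if (i = 1 ∧ j = 0) ∨ (i = 3 ∧ j = 2) ∨ (i = 5 ∧ j = 4) then 1
  else if (i = 0 ∧ j = 1) ∨ (i = 2 ∧ j = 3) ∨ (i = 4 ∧ j = 5) then -1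
  else 0

/-- `A ∈ 𝔰𝔭(ℝ⁶)` iff `AJ + JAᵗ = 0`. -/
def inSp (A : M6) : Prop := A * J6 + J6 * Aᵀ = 0

/-- The symmetric part `S_A = ½(A + Aᵗ)`. -/
def symPart (A : M6) : M6 := (1/2 : ℝ) • (A + Aᵀ)

/-- Frobenius inner product `⟨X,Y⟩ = tr(XYᵗ)`. -/
def mdot {n : ℕ} (X Y : Matrix (Fin n) (Fin n) ℝ) : ℝ := (X * Yᵀ).trace

/-- Commutator `[X,Y] = XY − YX`. -/
def mcomm {n : ℕ} (X Y : Matrix (Fin n) (Fin n) ℝ) : Matrix (Fin n) (Fin n) ℝ := X * Y - Y * X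

/-- Kronecker delta. -/
def kdelta {n : ℕ} (x y : Fin n) : ℝ := if x = y then 1 else 0

/-- The totally antisymmetric 3-tensor `e^a ∧ e^b ∧ e^c` evaluated on `(e_i, e_j, e_k)`. -/
def alt3 {n : ℕ} (a b c i j k : Fin n) : ℝ :=
  Matrix.det !![kdelta a i, kdelta a j, kdelta a k;
                kdelta b i, kdelta b j, kdelta b k;
                kdelta c i, kdelta c j, kdelta c k]

/-- `ρ⁺ = e¹³⁵ − e¹⁴⁶ − e²⁴⁵ − e²³⁶` (here written with 0-based indices). -/
def rhoP (i j k : Fin 6) : ℝ :=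
  alt3 0 2 4 i j k - alt3 0 3 5 i j k - alt3 1 3 4 i j k - alt3 1 2 5 i j k

/-- `(h ∘₆ k)_{ab} = Σ_{m,n,p,q} h_{mn} k_{pq} ρ⁺_{mpa} ρ⁺_{nqb}`. -/
def circ6 (h k : M6) : M6 :=
  Matrix.of fun a b => ∑ m, ∑ n, ∑ p, ∑ q, h m n * k p q * rhoP m p a * rhoP n q b

/-- The bracket-flow vector field of the Laplacian coflow. -/
def Fflow (A : M6) : M6 :=
  (-((1/2 : ℝ) * (symPart A * symPart A).trace + (1/4 : ℝ) * ((J6 * A).trace)^2)) • A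
  + (1/2 : ℝ) • mcomm A (mcomm A Aᵀ)
  + (1/2 : ℝ) • mcomm A (circ6 (symPart A) (symPart A))

lemma mdot_comm_right (A C : M6) :
    mdot (mcomm A C) A = - mdot C (mcomm A Aᵀ) := by
  simp only [mdot, mcomm, Matrix.sub_mul, Matrix.mul_sub, Matrix.transpose_sub,
    Matrix.transpose_mul, Matrix.transpose_transpose, Matrix.trace_sub]
  have h1 : (A * C * Aᵀ).trace = (C * (Aᵀ * A)).trace := by
    rw [Matrix.trace_mul_comm, ← Matrix.mul_assoc, Matrix.trace_mul_comm]
  have h2 : (C * A * Aᵀ).trace = (C * (A * Aᵀ)).trace := by rw [Matrix.mul_assoc]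
  rw [h1, h2]; ring

lemma symPart_transpose (A : M6) : (symPart A)ᵀ = symPart A := by
  simp [symPart, Matrix.transpose_add, add_comm]

lemma mdot_smul (c : ℝ) (X Y : M6) : mdot (c • X) Y = c * mdot X Y := by
  simp [mdot, Matrix.smul_mul]

lemma mdot_add (X Y Z : M6) : mdot (X + Y) Z = mdot X Z + mdot Y Z := by
  simp [mdot, Matrix.add_mul]

lemma key (A : M6) :
    2 * mdot (Fflow A) A =
      -(mdot (symPart A) (symPart A) + (1/2) * ((J6 * A).trace)^2) * mdot A A
        - mdot (mcomm A Aᵀ) (mcomm A Aᵀ)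
        - mdot (circ6 (symPart A) (symPart A)) (mcomm A Aᵀ) := by
  have hS : mdot (symPart A) (symPart A) = (symPart A * symPart A).trace := by
    rw [mdot, symPart_transpose]
  rw [Fflow, mdot_add, mdot_add, mdot_smul, mdot_smul, mdot_smul,
    mdot_comm_right A (mcomm A Aᵀ), mdot_comm_right A (circ6 (symPart A) (symPart A)), hS]
  ring

/-- Along any bracket flow solution `A(t) ∈ 𝔰𝔭(ℝ⁶)` on an open interval one has
`d/dt |A|² = −(|S_A|² + ½(tr JA)²)|A|² − |[A,Aᵗ]|² − ⟨S_A ∘₆ S_A, [A,Aᵗ]⟩`. -/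
theorem norm_evolution (a b : ℝ) (A : ℝ → M6)
    (hsp : ∀ t ∈ Set.Ioo a b, inSp (A t))
    (hflow : ∀ t ∈ Set.Ioo a b, ∀ i j, HasDerivAt (fun s => A s i j) (Fflow (A t) i j) t) :
    ∀ t ∈ Set.Ioo a b,
      HasDerivAt (fun s => mdot (A s) (A s))
        (-(mdot (symPart (A t)) (symPart (A t)) + (1/2) * ((J6 * A t).trace)^2)
            * mdot (A t) (A t)
          - mdot (mcomm (A t) (A t)ᵀ) (mcomm (A t) (A t)ᵀ)
          - mdot (circ6 (symPart (A t)) (symPart (A t))) (mcomm (A t) (A t)ᵀ)) t := by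
  intro t ht
  have hd : HasDerivAt (fun s => mdot (A s) (A s)) (2 * mdot (Fflow (A t)) (A t)) t := by
    have hsum : HasDerivAt (fun s => ∑ i : Fin 6, ∑ j : Fin 6, A s i j * A s i j)
        (∑ i : Fin 6, ∑ j : Fin 6,
          (Fflow (A t) i j * A t i j + A t i j * Fflow (A t) i j)) t := by
      refine HasDerivAt.fun_sum fun i _ => HasDerivAt.fun_sum fun j _ => ?_
      exact (hflow t ht i j).mul (hflow t ht i j)
    have heq : (fun s => ∑ i : Fin 6, ∑ j : Fin 6, A s i j * A s i j)
        = fun s => mdot (A s) (A s) := by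
      funext s
      simp [mdot, Matrix.trace, Matrix.mul_apply, Matrix.diag]
    rw [heq] at hsum
    convert hsum using 1
    simp only [mdot, Matrix.trace, Matrix.mul_apply, Matrix.diag, Matrix.transpose_apply]
    rw [Finset.mul_sum]
    refine Finset.sum_congr rfl fun i _ => ?_
    rw [Finset.mul_sum]
    refine Finset.sum_congr rfl fun j _ => ?_
    ring
  rw [key (A t)] at hd
  exact hd
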